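/- Let λ be a composition, ν a composition, and α : {0,...,r} → {0,...,r} with α(0)=0. Suppose there exist a λ-block b_k of size λ_k = p^t > p^s and an index i in a ν-block b_j of size ν_j = p^s with α(i) ∈ b_k. Set A₁ = b_k ∩ α(b_j), a₁ = #A₁, so 1 ≤ a₁ ≤ p^s < p^t. Then every σ ∈ G_{R,k}(λ,α,ν) = {σ ∈ S(b_k) : ∃π ∈ G_ν, σα = απ} preserves A₁ and b_k∖A₁; hence G_{R,k}(λ,α,ν) is contained in S(A₁) × S(b_k∖A₁), and the index [S(b_k) : G_{R,k}(λ,α,ν)] is divisible by p. -/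

import Mathlib

/-- The label of the block of the composition `l` containing `k`:
`0` for `k = 0`, the (1-based) index of the consecutive `l`-block containing
`k` for `1 ≤ k ≤ l.sum`, and `l.length + 1` for `k > l.sum`. -/
def blockOf (l : List ℕ) (k : ℕ) : ℕ :=
  if k = 0 then 0
  else ((Finset.range l.length).filter (fun i => (l.take (i + 1)).sum < k)).card + 1

/-- The Young subgroup of the composition `l`, as the set of permutations of `ℕ`
preserving every `l`-block (and fixing `0` and everything beyond `l.sum`). -/
def youngSet (l : List ℕ) : Set (Equiv.Perm ℕ) :=
  {σ | (∀ k, blockOf l (σ k) = blockOf l k) ∧ ∀ k, l.sum < k → σ k = k}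

lemma take_sum_mono (l : List ℕ) {a b : ℕ} (h : a ≤ b) :
    (l.take a).sum ≤ (l.take b).sum := by
  have h1 : l.take a = (l.take b).take a := by
    rw [List.take_take, min_eq_left h]
  rw [h1]
  exact List.Sublist.sum_le_sum (List.take_sublist _ _) (fun x _ => Nat.zero_le x)

lemma take_sum_le (l : List ℕ) (a : ℕ) : (l.take a).sum ≤ l.sum :=
  List.Sublist.sum_le_sum (List.take_sublist _ _) (fun x _ => Nat.zero_le x)

lemma blockOf_zero (l : List ℕ) : blockOf l 0 = 0 := if_pos rfl

lemma blockOf_eq_iff (l : List ℕ) {k m : ℕ} (hk : k ≠ 0) (hm : m < l.length) :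
    blockOf l k = m + 1 ↔ (l.take m).sum < k ∧ k ≤ (l.take (m + 1)).sum := by
  rw [blockOf, if_neg hk, Nat.add_right_cancel_iff]
  constructor
  · intro h
    constructor
    · by_contra hc
      push_neg at hc
      have hm0 : 0 < m := by
        rcases Nat.eq_zero_or_pos m with h0 | h0
        · subst h0; simp only [List.take_zero, List.sum_nil, Nat.le_zero] at hc; omega
        · exact h0
      have hsub : ((Finset.range l.length).filter
          (fun i => (l.take (i + 1)).sum < k)) ⊆ Finset.range (m - 1) := by
        intro i hi
        simp only [Finset.mem_filter, Finset.mem_range] at hi ⊢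
        by_contra him
        push_neg at him
        have : (l.take m).sum ≤ (l.take (i + 1)).sum :=
          take_sum_mono l (by omega)
        omega
      have := Finset.card_le_card hsub
      rw [h, Finset.card_range] at this
      omega
    · by_contra hc
      push_neg at hc
      have hsub : Finset.range (m + 1) ⊆ (Finset.range l.length).filter
          (fun i => (l.take (i + 1)).sum < k) := by
        intro i hi
        simp only [Finset.mem_range] at hi
        simp only [Finset.mem_filter, Finset.mem_range]
        refine ⟨by omega, lt_of_le_of_lt ?_ hc⟩
        exact take_sum_mono l (by omega)
      have := Finset.card_le_card hsub
      rw [h, Finset.card_range] at this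
      omega
  · rintro ⟨h1, h2⟩
    have : (Finset.range l.length).filter (fun i => (l.take (i + 1)).sum < k)
        = Finset.range m := by
      ext i
      simp only [Finset.mem_filter, Finset.mem_range]
      constructor
      · rintro ⟨hi, hik⟩
        by_contra him
        push_neg at him
        have : (l.take (m + 1)).sum ≤ (l.take (i + 1)).sum :=
          take_sum_mono l (by omega)
        omega
      · intro him
        refine ⟨by omega, lt_of_le_of_lt ?_ h1⟩
        exact take_sum_mono l (by omega)
    rw [this, Finset.card_range]

lemma young_one (l : List ℕ) : (1 : Equiv.Perm ℕ) ∈ youngSet l :=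
  ⟨fun _ => rfl, fun _ _ => rfl⟩

lemma young_mul (l : List ℕ) {π₁ π₂ : Equiv.Perm ℕ} (h1 : π₁ ∈ youngSet l)
    (h2 : π₂ ∈ youngSet l) : π₁ * π₂ ∈ youngSet l := by
  refine ⟨fun k => ?_, fun k hk => ?_⟩
  · rw [Equiv.Perm.mul_apply, h1.1, h2.1]
  · rw [Equiv.Perm.mul_apply, h2.2 k hk, h1.2 k hk]

lemma young_le {l : List ℕ} {π : Equiv.Perm ℕ} (h : π ∈ youngSet l) {x : ℕ}
    (hx : x ≤ l.sum) : π x ≤ l.sum := by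
  by_contra hc
  push_neg at hc
  have h2 := h.2 (π x) hc
  have := π.injective h2
  omega

lemma perm_apply_inv_self (f : Equiv.Perm ℕ) (x : ℕ) : f (f⁻¹ x) = x :=
  f.apply_symm_apply x

lemma young_inv {l : List ℕ} {π : Equiv.Perm ℕ} (h : π ∈ youngSet l) :
    π⁻¹ ∈ youngSet l := by
  refine ⟨fun k => ?_, fun k hk => ?_⟩
  · have := h.1 (π⁻¹ k)
    rw [perm_apply_inv_self] at this
    exact this.symm
  · have h2 := h.2 k hk
    exact π.injective (by rw [perm_apply_inv_self, h2])

lemma card_perm_set (S : Set ℕ) (h : S.Finite) :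
    Nat.card (Equiv.Perm S) = Nat.factorial S.ncard := by
  haveI := h.fintype
  rw [Nat.card_eq_fintype_card, Fintype.card_perm, ← Nat.card_coe_set_eq,
    Nat.card_eq_fintype_card]

/-- Let `b_k` be a `λ`-block of size `p^t` and `b_j` a `ν`-block of size
`p^s < p^t` with `α(i) ∈ b_k` for some `i ∈ b_j`, and set
`A₁ = b_k ∩ α(b_j)`.  Every `σ` in
`G_{R,k}(λ,α,ν) = {σ ∈ S(b_k) : ∃ π ∈ G_ν, σα = απ}` preserves `A₁` and
`b_k ∖ A₁`; hence `G_{R,k}(λ,α,ν) ⊆ S(A₁) × S(b_k∖A₁)` and the index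
`[S(b_k) : G_{R,k}(λ,α,ν)]` is divisible by `p`. -/
theorem stmt_18 (p : ℕ) (hp : p.Prime) (r s t : ℕ) (hst : s < t)
    (llam lnu : List ℕ) (hlamsum : llam.sum = r) (hnusum : lnu.sum = r)
    (kb jb : ℕ) (hkb : kb < llam.length) (hjb : jb < lnu.length)
    (hlamk : llam.get ⟨kb, hkb⟩ = p ^ t) (hnuj : lnu.get ⟨jb, hjb⟩ = p ^ s)
    (α : ℕ → ℕ) (hα0 : α 0 = 0) (hαr : ∀ x, x ≤ r → α x ≤ r)
    (i : ℕ) (hi : blockOf lnu i = jb + 1) (hαi : blockOf llam (α i) = kb + 1) :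
    (∀ σ : Equiv.Perm ℕ,
      ((∀ x, blockOf llam x ≠ kb + 1 → σ x = x) ∧
        (∀ x, blockOf llam (σ x) = blockOf llam x) ∧
        ∃ π ∈ youngSet lnu, ∀ x, x ≤ r → σ (α x) = α (π x)) →
      (∀ y, (blockOf llam y = kb + 1 ∧ ∃ x, blockOf lnu x = jb + 1 ∧ α x = y) →
        (blockOf llam (σ y) = kb + 1 ∧ ∃ x, blockOf lnu x = jb + 1 ∧ α x = σ y)) ∧
      (∀ y, blockOf llam y = kb + 1 → ¬ (∃ x, blockOf lnu x = jb + 1 ∧ α x = y) →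
        blockOf llam (σ y) = kb + 1 ∧ ¬ ∃ x, blockOf lnu x = jb + 1 ∧ α x = σ y)) ∧
    p ∣ (Nat.factorial (p ^ t) /
      Set.ncard {σ : Equiv.Perm ℕ |
        (∀ x, blockOf llam x ≠ kb + 1 → σ x = x) ∧
        (∀ x, blockOf llam (σ x) = blockOf llam x) ∧
        ∃ π ∈ youngSet lnu, ∀ x, x ≤ r → σ (α x) = α (π x)}) := by
  classical
  -- x in the ν-block jb implies x ≤ r
  have hler : ∀ x, blockOf lnu x = jb + 1 → x ≤ r := by
    intro x hx
    have hx0 : x ≠ 0 := by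
      intro h; rw [h, blockOf_zero] at hx; omega
    have := ((blockOf_eq_iff lnu hx0 hjb).1 hx).2
    calc x ≤ (lnu.take (jb + 1)).sum := this
      _ ≤ lnu.sum := take_sum_le _ _
      _ = r := hnusum
  -- Part 1
  have key : ∀ σ : Equiv.Perm ℕ,
      ((∀ x, blockOf llam x ≠ kb + 1 → σ x = x) ∧
        (∀ x, blockOf llam (σ x) = blockOf llam x) ∧
        ∃ π ∈ youngSet lnu, ∀ x, x ≤ r → σ (α x) = α (π x)) →
      (∀ y, (blockOf llam y = kb + 1 ∧ ∃ x, blockOf lnu x = jb + 1 ∧ α x = y) →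
        (blockOf llam (σ y) = kb + 1 ∧ ∃ x, blockOf lnu x = jb + 1 ∧ α x = σ y)) ∧
      (∀ y, blockOf llam y = kb + 1 → ¬ (∃ x, blockOf lnu x = jb + 1 ∧ α x = y) →
        blockOf llam (σ y) = kb + 1 ∧ ¬ ∃ x, blockOf lnu x = jb + 1 ∧ α x = σ y) := by
    rintro σ ⟨hfix, hblk, π, hπ, hcomm⟩
    constructor
    · rintro y ⟨hy1, x, hx1, rfl⟩
      refine ⟨by rw [hblk]; exact hy1, π x, ?_, ?_⟩
      · rw [hπ.1 x]; exact hx1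
      · exact (hcomm x (hler x hx1)).symm
    · intro y hy1 hny
      refine ⟨by rw [hblk]; exact hy1, ?_⟩
      rintro ⟨x, hx1, hx2⟩
      have hπinv := young_inv hπ
      have hx'1 : blockOf lnu (π⁻¹ x) = jb + 1 := by rw [hπinv.1 x]; exact hx1
      have hx'r : π⁻¹ x ≤ r := hler _ hx'1
      have h3 : σ (α (π⁻¹ x)) = α (π (π⁻¹ x)) := hcomm _ hx'r
      rw [perm_apply_inv_self] at h3
      have h4 : α (π⁻¹ x) = y := σ.injective (by rw [h3, hx2])
      exact hny ⟨π⁻¹ x, hx'1, h4⟩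
  refine ⟨key, ?_⟩
  -- Part 2
  set G : Set (Equiv.Perm ℕ) := {σ : Equiv.Perm ℕ |
        (∀ x, blockOf llam x ≠ kb + 1 → σ x = x) ∧
        (∀ x, blockOf llam (σ x) = blockOf llam x) ∧
        ∃ π ∈ youngSet lnu, ∀ x, x ≤ r → σ (α x) = α (π x)} with hGdef
  have hG1 : (1 : Equiv.Perm ℕ) ∈ G :=
    ⟨fun _ _ => rfl, fun _ => rfl, 1, young_one lnu, fun _ _ => rfl⟩
  -- G is a subgroup
  let G' : Subgroup (Equiv.Perm ℕ) :=
  { carrier := G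
    one_mem' := hG1
    mul_mem' := by
      rintro σ₁ σ₂ ⟨hf1, hb1, π₁, hπ1, hc1⟩ ⟨hf2, hb2, π₂, hπ2, hc2⟩
      refine ⟨fun x hx => ?_, fun x => ?_, π₁ * π₂, young_mul lnu hπ1 hπ2, fun x hx => ?_⟩
      · rw [Equiv.Perm.mul_apply, hf2 x hx, hf1 x hx]
      · rw [Equiv.Perm.mul_apply, hb1, hb2]
      · have hπ2x : π₂ x ≤ r := by
          have := young_le hπ2 (x := x) (by rwa [hnusum]); rwa [hnusum] at this
        rw [Equiv.Perm.mul_apply, hc2 x hx, hc1 _ hπ2x, Equiv.Perm.mul_apply]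
    inv_mem' := by
      rintro σ ⟨hf, hb, π, hπ, hc⟩
      refine ⟨fun x hx => ?_, fun x => ?_, π⁻¹, young_inv hπ, fun x hx => ?_⟩
      · exact σ.injective (by rw [perm_apply_inv_self, hf x hx])
      · have := hb (σ⁻¹ x)
        rw [perm_apply_inv_self] at this
        exact this.symm
      · have hπinv := young_inv hπ
        have hx' : π⁻¹ x ≤ r := by
          have := young_le hπinv (x := x) (by rwa [hnusum]); rwa [hnusum] at this
        have h3 : σ (α (π⁻¹ x)) = α (π (π⁻¹ x)) := hc _ hx'
        rw [perm_apply_inv_self] at h3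
        exact σ.injective (by rw [perm_apply_inv_self, h3]) }
  -- the λ-block kb as an interval
  set Sk := (llam.take kb).sum with hSk
  set Sk1 := (llam.take (kb + 1)).sum with hSk1
  have hSkk : Sk1 = Sk + p ^ t := by
    rw [hSk1, hSk, ← hlamk]
    rw [← List.take_concat_get' llam kb hkb, List.sum_append]
    simp
  have hBset : ∀ y, blockOf llam y = kb + 1 ↔ y ∈ Set.Ioc Sk Sk1 := by
    intro y
    constructor
    · intro hy
      have hy0 : y ≠ 0 := by
        intro h; rw [h, blockOf_zero] at hy; omega
      exact (blockOf_eq_iff llam hy0 hkb).1 hy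
    · intro hy
      have hy0 : y ≠ 0 := by
        rcases hy with ⟨h1, _⟩; omega
      exact (blockOf_eq_iff llam hy0 hkb).2 hy
  -- the ν-block jb as an interval
  set Tj := (lnu.take jb).sum with hTj
  set Tj1 := (lnu.take (jb + 1)).sum with hTj1
  have hTjj : Tj1 = Tj + p ^ s := by
    rw [hTj1, hTj, ← hnuj]
    rw [← List.take_concat_get' lnu jb hjb, List.sum_append]
    simp
  have hNset : ∀ y, blockOf lnu y = jb + 1 ↔ y ∈ Set.Ioc Tj Tj1 := by
    intro y
    constructor
    · intro hy
      have hy0 : y ≠ 0 := by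
        intro h; rw [h, blockOf_zero] at hy; omega
      exact (blockOf_eq_iff lnu hy0 hjb).1 hy
    · intro hy
      have hy0 : y ≠ 0 := by
        rcases hy with ⟨h1, _⟩; omega
      exact (blockOf_eq_iff lnu hy0 hjb).2 hy
  -- the sets A and C
  set A : Set ℕ :=
    {y | blockOf llam y = kb + 1 ∧ ∃ x, blockOf lnu x = jb + 1 ∧ α x = y} with hAdef
  set C : Set ℕ := Set.Ioc Sk Sk1 \ A with hCdef
  have hBfin : (Set.Ioc Sk Sk1).Finite := Set.finite_Ioc _ _
  have hAsub : A ⊆ Set.Ioc Sk Sk1 := fun y hy => (hBset y).1 hy.1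
  have hAfin : A.Finite := hBfin.subset hAsub
  have hCfin : C.Finite := hBfin.subset Set.diff_subset
  have hBcard : (Set.Ioc Sk Sk1).ncard = p ^ t := by
    rw [← Finset.coe_Ioc, Set.ncard_coe_finset, Nat.card_Ioc]
    omega
  have hApos : 0 < A.ncard := by
    rw [Set.ncard_pos hAfin]
    exact ⟨α i, hαi, i, hi, rfl⟩
  have hAle : A.ncard ≤ p ^ s := by
    have h1 : A ⊆ α '' Set.Ioc Tj Tj1 := by
      rintro y ⟨_, x, hx1, hx2⟩
      exact ⟨x, (hNset x).1 hx1, hx2⟩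
    have h2 : (Set.Ioc Tj Tj1).ncard = p ^ s := by
      rw [← Finset.coe_Ioc, Set.ncard_coe_finset, Nat.card_Ioc]
      omega
    calc A.ncard ≤ (α '' Set.Ioc Tj Tj1).ncard :=
          Set.ncard_le_ncard h1 ((Set.finite_Ioc _ _).image α)
      _ ≤ (Set.Ioc Tj Tj1).ncard := Set.ncard_image_le (Set.finite_Ioc _ _)
      _ = p ^ s := h2
  have hpow : p ^ s < p ^ t := Nat.pow_lt_pow_right hp.one_lt hst
  have hAlt : A.ncard < p ^ t := lt_of_le_of_lt hAle hpow
  have hCcard : C.ncard = p ^ t - A.ncard := by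
    rw [hCdef, Set.ncard_diff hAsub hAfin, hBcard]
  -- membership preservation
  have hmemA : ∀ σ ∈ G', ∀ x, x ∈ A ↔ σ x ∈ A := by
    intro σ hσ x
    obtain ⟨k1, k2⟩ := key σ hσ
    constructor
    · intro hx; exact k1 x hx
    · intro hx
      by_cases hb : blockOf llam x = kb + 1
      · by_contra hxA
        have := (k2 x hb (fun h => hxA ⟨hb, h⟩)).2
        exact this hx.2
      · rw [hσ.1 x hb] at hx
        exact hx
  have hmemC : ∀ σ ∈ G', ∀ x, x ∈ C ↔ σ x ∈ C := by
    intro σ hσ x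
    obtain ⟨k1, k2⟩ := key σ hσ
    constructor
    · rintro ⟨hx1, hx2⟩
      have hb : blockOf llam x = kb + 1 := (hBset x).2 hx1
      have := k2 x hb (fun h => hx2 ⟨hb, h⟩)
      exact ⟨(hBset _).1 this.1, fun h => this.2 h.2⟩
    · rintro ⟨hx1, hx2⟩
      have hb : blockOf llam x = kb + 1 := by
        rw [← hσ.2.1 x]; exact (hBset _).2 hx1
      refine ⟨(hBset x).1 hb, fun hxA => ?_⟩
      exact hx2 ((hmemA σ hσ x).1 hxA)
  -- the embedding into Perm A × Perm C
  let φ : G' →* Equiv.Perm A × Equiv.Perm C :=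
  { toFun := fun σ =>
      (Equiv.Perm.subtypePerm σ.1 (fun x => (hmemA σ.1 σ.2 x).symm),
        Equiv.Perm.subtypePerm σ.1 (fun x => (hmemC σ.1 σ.2 x).symm))
    map_one' := by
      refine Prod.ext ?_ ?_ <;> · ext x; rfl
    map_mul' := by
      intro σ τ
      refine Prod.ext ?_ ?_ <;> · ext x; rfl }
  have hφinj : Function.Injective φ := by
    intro σ τ h
    rw [Prod.ext_iff] at h
    obtain ⟨h1, h2⟩ := h
    ext x
    by_cases hb : blockOf llam x = kb + 1
    · by_cases hxA : x ∈ A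
      · exact Subtype.ext_iff.1 (Equiv.ext_iff.1 h1 ⟨x, hxA⟩)
      · have hxC : x ∈ C := ⟨(hBset x).1 hb, hxA⟩
        exact Subtype.ext_iff.1 (Equiv.ext_iff.1 h2 ⟨x, hxC⟩)
    · rw [σ.2.1 x hb, τ.2.1 x hb]
  -- cardinality facts
  haveI : Finite (Equiv.Perm A) := by
    haveI := hAfin.fintype; exact Finite.of_fintype _
  haveI : Finite (Equiv.Perm C) := by
    haveI := hCfin.fintype; exact Finite.of_fintype _
  haveI hG'fin : Finite G' := Finite.of_injective φ hφinj
  have hcard : Set.ncard G = Nat.card G' := (Nat.card_coe_set_eq G).symm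
  have hgpos : 0 < Set.ncard G := by
    rw [hcard]
    exact Nat.card_pos (α := G')
  have hdvd1 : Nat.card G' ∣ Nat.factorial A.ncard * Nat.factorial C.ncard := by
    have := Subgroup.card_dvd_of_injective φ hφinj
    rwa [Nat.card_prod, card_perm_set A hAfin, card_perm_set C hCfin] at this
  -- final arithmetic
  set a := A.ncard with ha
  set g := Set.ncard G with hg
  have hdvd2 : g ∣ Nat.factorial a * Nat.factorial (p ^ t - a) := by
    rw [hcard, ← hCcard]; exact hdvd1
  obtain ⟨c, hc⟩ := hdvd2
  have hfact : Nat.factorial (p ^ t) = (p ^ t).choose a * c * g := by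
    rw [← Nat.choose_mul_factorial_mul_factorial hAlt.le, mul_assoc, hc]
    ring
  have hquot : Nat.factorial (p ^ t) / g = (p ^ t).choose a * c := by
    rw [hfact, Nat.mul_div_cancel _ hgpos]
  rw [hquot]
  exact Dvd.dvd.mul_right (hp.dvd_choose_pow hApos.ne' hAlt.ne) c
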